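/- Let D and L be independent integrable nonnegative random variables with right-unbounded support. If D has a P-tail heavier than L (i.e., there exists z_0 such that P[D>z] ≥ P[L>z] for all z ≥ z_0), then ∫_0^∞ (E[L·1{L≤z}]/P[L>z]) f_D(dz) = ∞; in particular the expected restart time E[T^R] is infinite. -/

import Mathlib

open MeasureTheory ProbabilityTheory Filter Set
open scoped ENNReal

private lemma tail_tendsto_aux {Ω : Type*} [MeasurableSpace Ω] (P : Measure Ω)
    [IsProbabilityMeasure P] {f : Ω → ℝ} (hf : Measurable f) :
    Tendsto (fun n : ℕ => P (f ⁻¹' Ioi (n : ℝ))) atTop (nhds 0) := by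
  have h := tendsto_measure_iInter_atTop (μ := P) (s := fun n : ℕ => f ⁻¹' Ioi (n : ℝ))
    (fun n => (measurableSet_Ioi.preimage hf).nullMeasurableSet)
    (fun m n hmn ω hω => show (m : ℝ) < f ω from
      lt_of_le_of_lt (show (m : ℝ) ≤ (n : ℝ) by exact_mod_cast hmn) hω)
    ⟨0, measure_ne_top _ _⟩
  have hempty : ⋂ n : ℕ, f ⁻¹' Ioi (n : ℝ) = ∅ := by
    ext ω
    simp only [mem_iInter, mem_preimage, mem_Ioi, mem_empty_iff_false, iff_false, not_forall,
      not_lt]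
    obtain ⟨n, hn⟩ := exists_nat_gt (f ω)
    exact ⟨n, hn.le⟩
  rwa [hempty, measure_empty] at h

/-- If `D` has a `P`-tail heavier than `L`, the integral in the
restart-time formula diverges and the expected restart time is infinite. -/
theorem restart_infinite_of_heavier_tail
    {Ω : Type*} [MeasurableSpace Ω] (P : Measure Ω) [IsProbabilityMeasure P]
    (D L0 : Ω → ℝ) (L : ℕ → Ω → ℝ)
    (hDmeas : Measurable D) (hL0meas : Measurable L0) (hLmeas : ∀ n, Measurable (L n))
    (hDnn : ∀ ω, 0 ≤ D ω) (hL0nn : ∀ ω, 0 ≤ L0 ω) (hLnn : ∀ n ω, 0 ≤ L n ω)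
    (hDint : Integrable D P) (hL0int : Integrable L0 P)
    (hDsupp : ∀ x : ℝ, 0 ≤ x → 0 < P {ω | x < D ω})
    (hLsupp : ∀ x : ℝ, 0 ≤ x → 0 < P {ω | x < L0 ω})
    (hid : ∀ n, IdentDistrib (L n) L0 P P)
    (hindep : iIndepFun (β := fun _ : Option ℕ => ℝ)
        (fun i => Option.elim i D L) P)
    (τ : Ω → ℕ) (hτ : ∀ ω, τ ω = sInf {k : ℕ | D ω < L k ω})
    (T : Ω → ℝ) (hT : ∀ ω, T ω = (∑ i ∈ Finset.range (τ ω), L i ω) + D ω)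
    -- D has a P-tail heavier than L
    (htail : ∃ z₀ : ℝ, ∀ z ≥ z₀, P {ω | z < L0 ω} ≤ P {ω | z < D ω}) :
    (∫⁻ z, (∫⁻ ω in {ω' | L0 ω' ≤ z}, ENNReal.ofReal (L0 ω) ∂P)
        / P {ω | z < L0 ω} ∂(P.map D)) = ⊤
      ∧ ∫⁻ ω, ENNReal.ofReal (T ω) ∂P = ⊤ := by
  classical
  obtain ⟨z₀, htail⟩ := htail
  have htail' : ∀ z, z₀ ≤ z → P (L0 ⁻¹' Ioi z) ≤ P (D ⁻¹' Ioi z) := fun z hz => htail z hz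
  -- abbreviation for the truncated mean
  set G : ℝ → ℝ≥0∞ :=
    fun w => ∫⁻ ω in {ω' | L0 ω' ≤ w}, ENNReal.ofReal (L0 ω) ∂P with hGdef
  -- positivity of tails
  have hTDpos : ∀ x : ℝ, 0 < P (D ⁻¹' Ioi x) := by
    intro x
    rcases le_or_gt 0 x with h | h
    · exact hDsupp x h
    · exact lt_of_lt_of_le (hDsupp 0 le_rfl)
        (measure_mono fun ω (hω : 0 < D ω) => lt_trans h hω)
  have hTLpos : ∀ x : ℝ, 0 < P (L0 ⁻¹' Ioi x) := by
    intro x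
    rcases le_or_gt 0 x with h | h
    · exact hLsupp x h
    · exact lt_of_lt_of_le (hLsupp 0 le_rfl)
        (measure_mono fun ω (hω : 0 < L0 ω) => lt_trans h hω)
  have hDtail := tail_tendsto_aux P hDmeas
  have hLtail := tail_tendsto_aux P hL0meas
  -- halving points of the D-tail
  have hnext : ∀ x : ℝ, ∃ y : ℝ, x < y ∧ P (D ⁻¹' Ioi y) ≤ P (D ⁻¹' Ioi x) / 2 := by
    intro x
    have h2 : (0 : ℝ≥0∞) < P (D ⁻¹' Ioi x) / 2 :=
      ENNReal.div_pos (hTDpos x).ne' (by norm_num)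
    obtain ⟨n, hn1, hn2⟩ := ((hDtail.eventually_lt_const h2).and
      (tendsto_natCast_atTop_atTop.eventually_gt_atTop x)).exists
    exact ⟨n, hn2, hn1.le⟩
  -- starting point `a`
  set t0 : ℝ := max z₀ 0 + 1 with ht0def
  have ht0pos : 0 < t0 := by
    have := le_max_right z₀ 0; simp only [ht0def]; linarith
  have : ∃ a : ℝ, t0 < a ∧ P (L0 ⁻¹' Ioi a) < P (L0 ⁻¹' Ioi t0) := by
    obtain ⟨n, hn1, hn2⟩ := ((hLtail.eventually_lt_const (hTLpos t0)).and
      (tendsto_natCast_atTop_atTop.eventually_gt_atTop t0)).exists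
    exact ⟨n, hn2, hn1⟩
  obtain ⟨a, hat0, haTL⟩ := this
  have haz₀ : z₀ ≤ a := by
    have := le_max_left z₀ 0; simp only [ht0def] at hat0; linarith
  have hGmono : Monotone G := fun u v huv =>
    lintegral_mono_set (fun ω (h : L0 ω ≤ u) => le_trans h huv)
  -- positivity of the truncated mean at `a`
  have hc : 0 < G a := by
    have hsetq : {ω | t0 < L0 ω} ∩ {ω | L0 ω ≤ a} = L0 ⁻¹' Ioi t0 \ L0 ⁻¹' Ioi a := by
      ext ω
      simp only [mem_inter_iff, mem_setOf_eq, mem_diff, mem_preimage, mem_Ioi, not_lt]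
    have hq : 0 < P ({ω | t0 < L0 ω} ∩ {ω | L0 ω ≤ a}) := by
      rw [hsetq, measure_diff (preimage_mono (Ioi_subset_Ioi hat0.le))
        ((measurableSet_Ioi.preimage hL0meas).nullMeasurableSet) (measure_ne_top _ _)]
      exact tsub_pos_iff_lt.mpr haTL
    have h1 : ENNReal.ofReal t0 * P ({ω | t0 < L0 ω} ∩ {ω | L0 ω ≤ a}) ≤ G a := by
      calc ENNReal.ofReal t0 * P ({ω | t0 < L0 ω} ∩ {ω | L0 ω ≤ a})
          = ∫⁻ _ in {ω | t0 < L0 ω} ∩ {ω | L0 ω ≤ a}, ENNReal.ofReal t0 ∂P :=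
            (setLIntegral_const _ _).symm
        _ ≤ ∫⁻ ω in {ω | t0 < L0 ω} ∩ {ω | L0 ω ≤ a}, ENNReal.ofReal (L0 ω) ∂P :=
            setLIntegral_mono'
              ((measurableSet_lt measurable_const hL0meas).inter
                (measurableSet_le hL0meas measurable_const))
              (fun ω hω => ENNReal.ofReal_le_ofReal hω.1.le)
        _ ≤ G a := lintegral_mono_set inter_subset_right
    exact lt_of_lt_of_le
      (ENNReal.mul_pos (ENNReal.ofReal_pos.mpr ht0pos).ne' hq.ne') h1
  -- the sequence of halving points
  choose next hnext1 hnext2 using hnext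
  set z : ℕ → ℝ := fun j => next^[j] a with hzdef
  have hz0 : z 0 = a := rfl
  have hzsucc : ∀ j, z (j + 1) = next (z j) := fun j => Function.iterate_succ_apply' next j a
  have hzlt : ∀ j, z j < z (j + 1) := fun j => by rw [hzsucc]; exact hnext1 _
  have hzmono : StrictMono z := strictMono_nat_of_lt_succ hzlt
  have hzhalf : ∀ j, P (D ⁻¹' Ioi (z (j + 1))) ≤ P (D ⁻¹' Ioi (z j)) / 2 := fun j => by
    rw [hzsucc]; exact hnext2 _
  have hza : ∀ j, a ≤ z j := fun j => hz0 ▸ hzmono.monotone (Nat.zero_le j)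
  -- the slabs
  have hIocpre : ∀ j, D ⁻¹' Ioc (z j) (z (j + 1)) = D ⁻¹' Ioi (z j) \ D ⁻¹' Ioi (z (j + 1)) := by
    intro j
    ext ω
    simp only [mem_preimage, mem_Ioc, mem_diff, mem_Ioi, not_lt]
  have hslab : ∀ j, P (D ⁻¹' Ioi (z j)) / 2 ≤ P (D ⁻¹' Ioc (z j) (z (j + 1))) := by
    intro j
    rw [hIocpre j, measure_diff (preimage_mono (Ioi_subset_Ioi (hzlt j).le))
      ((measurableSet_Ioi.preimage hDmeas).nullMeasurableSet) (measure_ne_top _ _)]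
    calc P (D ⁻¹' Ioi (z j)) / 2
        = P (D ⁻¹' Ioi (z j)) - P (D ⁻¹' Ioi (z j)) / 2 :=
          (ENNReal.sub_half (measure_ne_top _ _)).symm
      _ ≤ P (D ⁻¹' Ioi (z j)) - P (D ⁻¹' Ioi (z (j + 1))) := tsub_le_tsub_left (hzhalf j) _
  -- the key independence identity
  have hkey : ∀ (n : ℕ) (s : Set ℝ) (sL : ℕ → Set ℝ), MeasurableSet s →
      (∀ k, MeasurableSet (sL k)) →
      P (D ⁻¹' s ∩ ⋂ k ∈ Finset.range n, L k ⁻¹' sL k)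
        = P (D ⁻¹' s) * ∏ k ∈ Finset.range n, P (L k ⁻¹' sL k) := by
    intro n s sL hs hsL
    have hnone : (none : Option ℕ) ∉ (Finset.range n).image some := by simp
    have h := iIndepFun_iff_measure_inter_preimage_eq_mul.mp hindep
      (insert none ((Finset.range n).image some))
      (sets := fun o => Option.elim o s sL) (fun i _ => by cases i <;> [exact hs; exact hsL _])
    rw [Finset.set_biInter_insert, Finset.prod_insert hnone,
      Finset.set_biInter_finset_image, Finset.prod_image
        (fun x _ y _ hxy => Option.some_injective _ hxy)] at h
    exact h
  -- layer-cake representation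
  have hlayer : ∀ (f : Ω → ℝ), Measurable f → (∀ ω, 0 ≤ f ω) → ∀ B : Set Ω, MeasurableSet B →
      ∫⁻ ω in B, ENNReal.ofReal (f ω) ∂P = ∫⁻ t in Ioi (0 : ℝ), P ({a | t < f a} ∩ B) := by
    intro f hf hfnn B hB
    rw [lintegral_eq_lintegral_meas_lt (P.restrict B) (Filter.Eventually.of_forall hfnn)
      hf.aemeasurable]
    exact lintegral_congr fun t => Measure.restrict_apply (measurableSet_lt measurable_const hf)
  have hGlayer : ∀ w : ℝ, G w = ∫⁻ t in Ioi (0 : ℝ), P (L0 ⁻¹' Ioc t w) := by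
    intro w
    rw [show G w = ∫⁻ ω in {ω' | L0 ω' ≤ w}, ENNReal.ofReal (L0 ω) ∂P from rfl,
      hlayer L0 hL0meas hL0nn {ω' | L0 ω' ≤ w} (measurableSet_le hL0meas measurable_const)]
    refine lintegral_congr fun t => ?_
    congr 1
  -- the basic rectangles
  set B : ℕ → ℕ → Set Ω := fun i j =>
    D ⁻¹' Ioc (z j) (z (j + 1)) ∩ ⋂ k ∈ Finset.range (i + 1), L k ⁻¹' Iic (z j) with hBdef
  have hBmeas : ∀ i j, MeasurableSet (B i j) := fun i j =>
    (measurableSet_Ioc.preimage hDmeas).inter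
      (Finset.measurableSet_biInter _ fun k _ => measurableSet_Iic.preimage (hLmeas k))
  -- the main computation
  have hBcomp : ∀ i j, ∫⁻ ω in B i j, ENNReal.ofReal (L i ω) ∂P
      = P (D ⁻¹' Ioc (z j) (z (j + 1))) * (P (L0 ⁻¹' Iic (z j)) ^ i * G (z j)) := by
    intro i j
    rw [hlayer (L i) (hLmeas i) (hLnn i) _ (hBmeas i j)]
    have hsets : ∀ t : ℝ, {a | t < L i a} ∩ B i j
        = D ⁻¹' Ioc (z j) (z (j + 1)) ∩ ⋂ k ∈ Finset.range (i + 1),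
            L k ⁻¹' (if k = i then Ioc t (z j) else Iic (z j)) := by
      intro t
      ext ω
      simp only [hBdef, mem_inter_iff, mem_setOf_eq, mem_iInter, Finset.mem_range, mem_preimage,
        Nat.lt_succ_iff]
      constructor
      · rintro ⟨ht, hD, hk⟩
        refine ⟨hD, fun k hki => ?_⟩
        by_cases h : k = i
        · subst h; rw [if_pos rfl]; exact ⟨ht, hk k hki⟩
        · rw [if_neg h]; exact hk k hki
      · rintro ⟨hD, hk⟩
        have hi := hk i le_rfl
        rw [if_pos rfl] at hi
        refine ⟨hi.1, hD, fun k hki => ?_⟩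
        by_cases h : k = i
        · subst h; exact hi.2
        · have := hk k hki; rwa [if_neg h] at this
    calc ∫⁻ t in Ioi (0 : ℝ), P ({a | t < L i a} ∩ B i j)
        = ∫⁻ t in Ioi (0 : ℝ), (P (D ⁻¹' Ioc (z j) (z (j + 1))) * P (L0 ⁻¹' Iic (z j)) ^ i)
            * P (L0 ⁻¹' Ioc t (z j)) := by
          refine lintegral_congr fun t => ?_
          rw [hsets t, hkey (i + 1) _ _ measurableSet_Ioc
            (fun k => by split <;> [exact measurableSet_Ioc; exact measurableSet_Iic])]
          rw [Finset.prod_range_succ]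
          have h1 : ∀ k ∈ Finset.range i,
              P (L k ⁻¹' (if k = i then Ioc t (z j) else Iic (z j))) = P (L0 ⁻¹' Iic (z j)) := by
            intro k hk
            rw [if_neg (Nat.ne_of_lt (Finset.mem_range.mp hk))]
            exact (hid k).measure_mem_eq measurableSet_Iic
          rw [Finset.prod_congr rfl h1, Finset.prod_const, Finset.card_range, if_pos rfl,
            (hid i).measure_mem_eq measurableSet_Ioc]
          ring
      _ = P (D ⁻¹' Ioc (z j) (z (j + 1))) * (P (L0 ⁻¹' Iic (z j)) ^ i * G (z j)) := by
          rw [lintegral_const_mul' _ _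
            (ENNReal.mul_ne_top (measure_ne_top _ _) (ENNReal.pow_ne_top (measure_ne_top _ _))),
            ← hGlayer (z j)]
          ring
  -- complement of FL, i.e. 1 - F = tail
  have hsub_eq : ∀ w : ℝ, (1 : ℝ≥0∞) - P (L0 ⁻¹' Iic w) = P (L0 ⁻¹' Ioi w) := by
    intro w
    refine ENNReal.sub_eq_of_eq_add (measure_ne_top _ _) ?_
    have h := measure_add_measure_compl (μ := P) (s := L0 ⁻¹' Iic w)
      (measurableSet_Iic.preimage hL0meas)
    rw [← Set.preimage_compl, compl_Iic, measure_univ] at h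
    rw [← h, add_comm]
  -- F < 1 everywhere
  have hFLlt1 : ∀ y : ℝ, P (L0 ⁻¹' Iic y) < 1 := by
    intro y
    rcases lt_or_ge (P (L0 ⁻¹' Iic y)) 1 with h | h
    · exact h
    · exfalso
      have h1 : P (L0 ⁻¹' Iic y) = 1 := le_antisymm prob_le_one h
      have h2 := hsub_eq y
      rw [h1, tsub_self] at h2
      exact (hTLpos y).ne' h2.symm
  -- the event that restart never happens is null
  set U : Set Ω := ⋃ k, {ω | D ω < L k ω} with hUdef
  set A : ℕ → Set Ω := fun i => ⋂ k ∈ Finset.range (i + 1), {ω | L k ω ≤ D ω} with hAdef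
  have hbound : ∀ (y : ℝ) (n : ℕ), P Uᶜ
      ≤ P (L0 ⁻¹' Iic y) ^ n + P (D ⁻¹' Ioi y) := by
    intro y n
    have hsub : Uᶜ
        ⊆ (D ⁻¹' univ ∩ ⋂ k ∈ Finset.range n, L k ⁻¹' Iic y) ∪ D ⁻¹' Ioi y := by
      intro ω hω
      simp only [hUdef, mem_compl_iff, mem_iUnion, mem_setOf_eq, not_exists, not_lt] at hω
      rcases le_or_gt (D ω) y with h | h
      · left
        refine ⟨trivial, ?_⟩
        simp only [mem_iInter, mem_preimage, mem_Iic]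
        exact fun k _ => le_trans (hω k) h
      · right; exact h
    refine le_trans (measure_mono hsub) (le_trans (measure_union_le _ _) ?_)
    refine add_le_add (le_of_eq ?_) le_rfl
    rw [hkey n univ (fun _ => Iic y) MeasurableSet.univ (fun _ => measurableSet_Iic)]
    rw [preimage_univ, measure_univ, one_mul,
      Finset.prod_congr rfl (fun k _ => (hid k).measure_mem_eq measurableSet_Iic),
      Finset.prod_const, Finset.card_range]
  have hU0 : P Uᶜ = 0 := by
    have h1 : ∀ y : ℝ, P Uᶜ ≤ P (D ⁻¹' Ioi y) := by
      intro y
      have htend : Tendsto (fun n : ℕ => P (L0 ⁻¹' Iic y) ^ n + P (D ⁻¹' Ioi y)) atTop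
          (nhds (0 + P (D ⁻¹' Ioi y))) :=
        (ENNReal.tendsto_pow_atTop_nhds_zero_of_lt_one (hFLlt1 y)).add tendsto_const_nhds
      have := ge_of_tendsto' htend (fun n => hbound y n)
      rwa [zero_add] at this
    have h2 := ge_of_tendsto' hDtail (fun n => h1 n)
    exact le_antisymm h2 zero_le
  -- description of the sets {i < τ}
  have hsetτ : ∀ i : ℕ, {ω | i < τ ω} = A i ∩ U := by
    intro i
    ext ω
    simp only [hAdef, hUdef, mem_setOf_eq, mem_inter_iff, mem_iInter, Finset.mem_range,
      mem_iUnion, Nat.lt_succ_iff, hτ ω]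
    constructor
    · intro h
      have hne : {k : ℕ | D ω < L k ω}.Nonempty := by
        by_contra hemp
        rw [Set.not_nonempty_iff_eq_empty] at hemp
        rw [hemp, Nat.sInf_empty] at h
        exact Nat.not_lt_zero i h
      refine ⟨fun k hki => ?_, hne⟩
      have : k ∉ {k : ℕ | D ω < L k ω} :=
        Nat.notMem_of_lt_sInf (lt_of_le_of_lt hki h)
      exact not_lt.mp this
    · rintro ⟨h1, k0, hk0⟩
      by_contra h
      push_neg at h
      have hmem := Nat.sInf_mem (⟨k0, hk0⟩ : {k : ℕ | D ω < L k ω}.Nonempty)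
      exact absurd hmem (not_lt.mpr (h1 _ h))
  have hAmeas : ∀ i, MeasurableSet (A i) := fun i =>
    Finset.measurableSet_biInter _ fun k _ => measurableSet_le (hLmeas k) hDmeas
  have hUmeas : MeasurableSet U :=
    MeasurableSet.iUnion fun k => measurableSet_lt hDmeas (hLmeas k)
  have hτmeas : ∀ i, MeasurableSet {ω | i < τ ω} := by
    intro i
    rw [hsetτ i]
    exact (hAmeas i).inter hUmeas
  -- step 1 : E[T] dominates the sum of truncated pieces
  have hstep1 : (∑' i, ∫⁻ ω in {ω' | i < τ ω'}, ENNReal.ofReal (L i ω) ∂P)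
      ≤ ∫⁻ ω, ENNReal.ofReal (T ω) ∂P := by
    have hpt : ∀ ω, (∑' i, Set.indicator {ω' | i < τ ω'} (fun ω' => ENNReal.ofReal (L i ω')) ω)
        ≤ ENNReal.ofReal (T ω) := by
      intro ω
      have h1 : (∑' i, Set.indicator {ω' | i < τ ω'} (fun ω' => ENNReal.ofReal (L i ω')) ω)
          = ∑ i ∈ Finset.range (τ ω), ENNReal.ofReal (L i ω) := by
        rw [tsum_eq_sum (s := Finset.range (τ ω))
          (fun i hi => Set.indicator_of_notMem (by simpa using hi) _)]
        exact Finset.sum_congr rfl fun i hi =>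
          Set.indicator_of_mem (by simpa using Finset.mem_range.mp hi) _
      rw [h1, hT ω, ENNReal.ofReal_add (Finset.sum_nonneg fun i _ => hLnn i ω) (hDnn ω),
        ENNReal.ofReal_sum_of_nonneg (fun i _ => hLnn i ω)]
      exact le_self_add
    calc (∑' i, ∫⁻ ω in {ω' | i < τ ω'}, ENNReal.ofReal (L i ω) ∂P)
        = ∑' i, ∫⁻ ω, Set.indicator {ω' | i < τ ω'} (fun ω' => ENNReal.ofReal (L i ω')) ω ∂P :=
          tsum_congr fun i => (lintegral_indicator (hτmeas i) _).symm
      _ = ∫⁻ ω, ∑' i, Set.indicator {ω' | i < τ ω'} (fun ω' => ENNReal.ofReal (L i ω')) ω ∂P :=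
          (lintegral_tsum fun i =>
            (((hLmeas i).ennreal_ofReal).indicator (hτmeas i)).aemeasurable).symm
      _ ≤ ∫⁻ ω, ENNReal.ofReal (T ω) ∂P := lintegral_mono hpt
  -- step 2 : drop the a.s. event
  have hstep2 : ∀ i, ∫⁻ ω in {ω' | i < τ ω'}, ENNReal.ofReal (L i ω) ∂P
      = ∫⁻ ω in A i, ENNReal.ofReal (L i ω) ∂P := by
    intro i
    rw [hsetτ i]
    have hae : (A i ∩ U : Set Ω) =ᵐ[P] (A i : Set Ω) := by
      rw [MeasureTheory.ae_eq_set]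
      constructor
      · have hempty : (A i ∩ U) \ A i = ∅ := Set.diff_eq_empty.mpr inter_subset_left
        rw [hempty, measure_empty]
      · refine measure_mono_null ?_ hU0
        intro ω hω
        exact fun hU => hω.2 ⟨hω.1, hU⟩
    rw [Measure.restrict_congr_set hae]
  -- step 3 : lower bound each truncated piece by the sum over slabs
  have hBsubA : ∀ i, (⋃ j, B i j) ⊆ A i := by
    intro i ω hω
    obtain ⟨j, hωj⟩ := mem_iUnion.mp hω
    obtain ⟨hD, hL'⟩ := hωj
    simp only [hAdef, mem_iInter, Finset.mem_range, mem_setOf_eq]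
    intro k hk
    have h1 : L k ω ≤ z j :=
      mem_iInter.mp (mem_iInter.mp hL' k) (Finset.mem_range.mpr hk)
    exact le_trans h1 (le_of_lt hD.1)
  have hBdisj : ∀ i, Pairwise (Function.onFun Disjoint fun j => B i j) := by
    intro i j j' hjj'
    refine Set.disjoint_of_subset inter_subset_left inter_subset_left (Disjoint.preimage D ?_)
    rw [Set.Ioc_disjoint_Ioc]
    rcases hjj'.lt_or_gt with h | h
    · exact le_trans (min_le_left _ _)
        (le_trans (hzmono.monotone h) (le_max_right _ _))
    · exact le_trans (min_le_right _ _)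
        (le_trans (hzmono.monotone h) (le_max_left _ _))
  have hstep3 : ∀ i,
      (∑' j, P (D ⁻¹' Ioc (z j) (z (j + 1))) * (P (L0 ⁻¹' Iic (z j)) ^ i * G (z j)))
      ≤ ∫⁻ ω in A i, ENNReal.ofReal (L i ω) ∂P := by
    intro i
    calc (∑' j, P (D ⁻¹' Ioc (z j) (z (j + 1))) * (P (L0 ⁻¹' Iic (z j)) ^ i * G (z j)))
        = ∑' j, ∫⁻ ω in B i j, ENNReal.ofReal (L i ω) ∂P :=
          tsum_congr fun j => (hBcomp i j).symm
      _ = ∫⁻ ω in ⋃ j, B i j, ENNReal.ofReal (L i ω) ∂P :=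
          (lintegral_iUnion (fun j => hBmeas i j) (hBdisj i) _).symm
      _ ≤ ∫⁻ ω in A i, ENNReal.ofReal (L i ω) ∂P :=
          lintegral_mono' (Measure.restrict_mono (hBsubA i) le_rfl) le_rfl
  -- the per-slab term bound
  have hcancel : ∀ j, P (D ⁻¹' Ioi (z j)) * (P (D ⁻¹' Ioi (z j)))⁻¹ = 1 := fun j =>
    ENNReal.mul_inv_cancel (hTDpos (z j)).ne' (measure_ne_top _ _)
  have hTLTD : ∀ j, (P (L0 ⁻¹' Ioi (z j)))⁻¹ ≥ (P (D ⁻¹' Ioi (z j)))⁻¹ := fun j =>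
    ENNReal.inv_le_inv' (htail' (z j) (le_trans haz₀ (hza j)))
  have hterm : ∀ j, G a / 2
      ≤ P (D ⁻¹' Ioc (z j) (z (j + 1))) * ((P (L0 ⁻¹' Ioi (z j)))⁻¹ * G (z j)) := by
    intro j
    calc G a / 2
        = (P (D ⁻¹' Ioi (z j)) / 2) * ((P (D ⁻¹' Ioi (z j)))⁻¹ * G a) := by
          rw [div_eq_mul_inv, div_eq_mul_inv,
            show P (D ⁻¹' Ioi (z j)) * 2⁻¹ * ((P (D ⁻¹' Ioi (z j)))⁻¹ * G a)
              = (P (D ⁻¹' Ioi (z j)) * (P (D ⁻¹' Ioi (z j)))⁻¹) * (G a * 2⁻¹) from by ring,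
            hcancel j, one_mul]
      _ ≤ P (D ⁻¹' Ioc (z j) (z (j + 1))) * ((P (L0 ⁻¹' Ioi (z j)))⁻¹ * G (z j)) :=
          mul_le_mul' (hslab j) (mul_le_mul' (hTLTD j) (hGmono (hza j)))
  have hc2 : G a / 2 ≠ 0 := by
    simp only [ne_eq, ENNReal.div_eq_zero_iff, not_or]
    exact ⟨hc.ne', ENNReal.ofNat_ne_top⟩
  -- geometric series identity
  have hgeom : ∀ j, (∑' i : ℕ, P (D ⁻¹' Ioc (z j) (z (j + 1)))
      * (P (L0 ⁻¹' Iic (z j)) ^ i * G (z j)))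
      = P (D ⁻¹' Ioc (z j) (z (j + 1))) * ((P (L0 ⁻¹' Ioi (z j)))⁻¹ * G (z j)) := by
    intro j
    rw [ENNReal.tsum_mul_left]
    congr 1
    rw [ENNReal.tsum_mul_right, ENNReal.tsum_geometric, hsub_eq (z j)]
  -- PART 2
  have hpart2 : ∫⁻ ω, ENNReal.ofReal (T ω) ∂P = ⊤ := by
    rw [eq_top_iff]
    calc (⊤ : ℝ≥0∞) = ∑' _ : ℕ, (G a / 2) :=
          (ENNReal.tsum_const_eq_top_of_ne_zero hc2).symm
      _ ≤ ∑' j, P (D ⁻¹' Ioc (z j) (z (j + 1))) * ((P (L0 ⁻¹' Ioi (z j)))⁻¹ * G (z j)) :=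
          ENNReal.tsum_le_tsum hterm
      _ = ∑' j, ∑' i, P (D ⁻¹' Ioc (z j) (z (j + 1)))
            * (P (L0 ⁻¹' Iic (z j)) ^ i * G (z j)) :=
          tsum_congr fun j => (hgeom j).symm
      _ = ∑' i, ∑' j, P (D ⁻¹' Ioc (z j) (z (j + 1)))
            * (P (L0 ⁻¹' Iic (z j)) ^ i * G (z j)) := ENNReal.tsum_comm
      _ ≤ ∑' i, ∫⁻ ω in A i, ENNReal.ofReal (L i ω) ∂P := ENNReal.tsum_le_tsum hstep3
      _ = ∑' i, ∫⁻ ω in {ω' | i < τ ω'}, ENNReal.ofReal (L i ω) ∂P :=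
          tsum_congr fun i => (hstep2 i).symm
      _ ≤ ∫⁻ ω, ENNReal.ofReal (T ω) ∂P := hstep1
  -- PART 1
  have hmapIoc : ∀ j, (P.map D) (Ioc (z j) (z (j + 1))) = P (D ⁻¹' Ioc (z j) (z (j + 1))) :=
    fun j => Measure.map_apply hDmeas measurableSet_Ioc
  have hpart1term : ∀ j, G a / 2
      ≤ ∫⁻ x in Ioc (z j) (z (j + 1)), G x / P (L0 ⁻¹' Ioi x) ∂(P.map D) := by
    intro j
    calc G a / 2
        = (G a * (P (D ⁻¹' Ioi (z j)))⁻¹) * (P (D ⁻¹' Ioi (z j)) / 2) := by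
          rw [div_eq_mul_inv, div_eq_mul_inv,
            show G a * (P (D ⁻¹' Ioi (z j)))⁻¹ * (P (D ⁻¹' Ioi (z j)) * 2⁻¹)
              = (P (D ⁻¹' Ioi (z j)) * (P (D ⁻¹' Ioi (z j)))⁻¹) * (G a * 2⁻¹) from by ring,
            hcancel j, one_mul]
      _ ≤ (G a * (P (D ⁻¹' Ioi (z j)))⁻¹) * (P.map D) (Ioc (z j) (z (j + 1))) := by
          rw [hmapIoc j]
          exact mul_le_mul_right (hslab j) _
      _ = ∫⁻ _ in Ioc (z j) (z (j + 1)), (G a * (P (D ⁻¹' Ioi (z j)))⁻¹) ∂(P.map D) :=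
          (setLIntegral_const _ _).symm
      _ ≤ ∫⁻ x in Ioc (z j) (z (j + 1)), G x / P (L0 ⁻¹' Ioi x) ∂(P.map D) := by
          refine setLIntegral_mono' measurableSet_Ioc fun x hx => ?_
          rw [div_eq_mul_inv]
          refine mul_le_mul' (hGmono (le_trans (hza j) hx.1.le)) ?_
          refine le_trans (hTLTD j) (ENNReal.inv_le_inv' ?_)
          exact measure_mono (preimage_mono (Ioi_subset_Ioi hx.1.le))
  have hIocdisj : Pairwise (Function.onFun Disjoint fun j => Ioc (z j) (z (j + 1))) := by
    intro j j' hjj'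
    rw [Function.onFun, Set.Ioc_disjoint_Ioc]
    rcases hjj'.lt_or_gt with h | h
    · exact le_trans (min_le_left _ _)
        (le_trans (hzmono.monotone h) (le_max_right _ _))
    · exact le_trans (min_le_right _ _)
        (le_trans (hzmono.monotone h) (le_max_left _ _))
  have hpart1 : (∫⁻ x, (∫⁻ ω in {ω' | L0 ω' ≤ x}, ENNReal.ofReal (L0 ω) ∂P)
      / P {ω | x < L0 ω} ∂(P.map D)) = ⊤ := by
    rw [eq_top_iff]
    calc (⊤ : ℝ≥0∞) = ∑' _ : ℕ, (G a / 2) :=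
          (ENNReal.tsum_const_eq_top_of_ne_zero hc2).symm
      _ ≤ ∑' j, ∫⁻ x in Ioc (z j) (z (j + 1)), G x / P (L0 ⁻¹' Ioi x) ∂(P.map D) :=
          ENNReal.tsum_le_tsum hpart1term
      _ = ∫⁻ x in ⋃ j, Ioc (z j) (z (j + 1)), G x / P (L0 ⁻¹' Ioi x) ∂(P.map D) :=
          (lintegral_iUnion (fun j => measurableSet_Ioc) hIocdisj _).symm
      _ ≤ ∫⁻ x, G x / P (L0 ⁻¹' Ioi x) ∂(P.map D) := setLIntegral_le_lintegral _ _
      _ = ∫⁻ x, (∫⁻ ω in {ω' | L0 ω' ≤ x}, ENNReal.ofReal (L0 ω) ∂P)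
            / P {ω | x < L0 ω} ∂(P.map D) := rfl
  exact ⟨hpart1, hpart2⟩
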